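/- arXiv:2105.15025 — 8 statements merged into one kernel-verified Lean document; each statement's English description precedes it below -/
import Mathlib

section
/- For every integer ℓ ≥ 1 and every integer m ≥ 0, Stern's formula holds: 2^{ℓ-1} · S_1(m)^ℓ = Σ_{ν odd, 1 ≤ ν ≤ ℓ} (ℓ choose ν) · S_{2ℓ-ν}(m), where S_n(m) = Σ_{k=0}^{m-1} k^n. -/
open Finset

lemma stern_key (ℓ : ℕ) (x : ℤ) :
    (x + x^2)^ℓ - (-x + x^2)^ℓ
      = 2 * ∑ ν ∈ (range (ℓ+1)).filter (fun ν => Odd ν),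
          (ℓ.choose ν : ℤ) * x^(2*ℓ-ν) := by
  rw [add_pow, add_pow, ← Finset.sum_sub_distrib, Finset.mul_sum,
    ← Finset.sum_filter_add_sum_filter_not (range (ℓ+1)) (fun ν => Odd ν)
      (fun ν => x ^ ν * (x^2) ^ (ℓ - ν) * (ℓ.choose ν : ℤ)
        - (-x) ^ ν * (x^2) ^ (ℓ - ν) * (ℓ.choose ν : ℤ))]
  have h2 : ∑ ν ∈ (range (ℓ+1)).filter (fun ν => ¬ Odd ν),
      (x ^ ν * (x^2) ^ (ℓ - ν) * (ℓ.choose ν : ℤ)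
        - (-x) ^ ν * (x^2) ^ (ℓ - ν) * (ℓ.choose ν : ℤ)) = 0 := by
    apply Finset.sum_eq_zero
    intro ν hν
    simp only [Finset.mem_filter, Finset.mem_range] at hν
    rw [(Nat.not_odd_iff_even.mp hν.2).neg_pow]
    ring
  rw [h2, add_zero]
  apply Finset.sum_congr rfl
  intro ν hν
  simp only [Finset.mem_filter, Finset.mem_range] at hν
  have hle : ν ≤ ℓ := Nat.lt_succ_iff.mp hν.1
  rw [hν.2.neg_pow]
  have hx : x^ν * (x^2)^(ℓ-ν) = x^(2*ℓ-ν) := by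
    rw [← pow_mul, ← pow_add]
    congr 1
    omega
  rw [← hx]
  ring

lemma stern_gauss (m : ℕ) : 2 * ∑ k ∈ Finset.range m, (k:ℤ) = (m:ℤ)^2 - m := by
  induction m with
  | zero => simp
  | succ n ihn =>
      rw [Finset.sum_range_succ, mul_add, ihn]
      push_cast
      ring

lemma stern_int (ℓ : ℕ) (hℓ : 1 ≤ ℓ) (m : ℕ) :
    (2:ℤ) ^ (ℓ - 1) * (∑ k ∈ Finset.range m, (k:ℤ)) ^ ℓ
      = ∑ ν ∈ (Finset.range (ℓ + 1)).filter (fun ν => Odd ν),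
          (ℓ.choose ν : ℤ) * ∑ k ∈ Finset.range m, (k:ℤ) ^ (2 * ℓ - ν) := by
  induction m with
  | zero =>
      simp [zero_pow (by omega : ℓ ≠ 0)]
  | succ m ih =>
      have h2ℓ : (2:ℤ)^ℓ = 2 * 2^(ℓ-1) := by
        rw [← pow_succ']
        congr 1
        omega
      simp only [Finset.sum_range_succ]
      simp only [mul_add]
      rw [Finset.sum_add_distrib, ← ih]
      apply mul_left_cancel₀ (two_ne_zero (α := ℤ))
      rw [mul_add, ← mul_assoc, ← mul_assoc, ← h2ℓ, ← mul_pow, ← mul_pow,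
        mul_add, stern_gauss m]
      have e1 : ((m:ℤ)^2 - m + 2*m) = (m:ℤ) + m^2 := by ring
      have e2 : ((m:ℤ)^2 - m) = -(m:ℤ) + m^2 := by ring
      rw [e1, e2]
      linarith [stern_key ℓ (m:ℤ)]

theorem stern_formula (ℓ : ℕ) (hℓ : 1 ≤ ℓ) (m : ℕ) :
    2 ^ (ℓ - 1) * (∑ k ∈ Finset.range m, k) ^ ℓ
      = ∑ ν ∈ (Finset.range (ℓ + 1)).filter (fun ν => Odd ν),
          ℓ.choose ν * ∑ k ∈ Finset.range m, k ^ (2 * ℓ - ν) := by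
  have h := stern_int ℓ hℓ m
  zify
  convert h using 2
end

section
/- (Faulhaber–Jacobi) For every n ≥ 2 there exists a polynomial F_n ∈ ℚ[x] of degree ⌊n/2⌋ - 1 such that S_n(x) = f_n(x) · F_n(S_1(x)) as polynomials in ℚ[x], where f_n(x) = S_2(x) if n is even, and f_n(x) = S_1(x)^2 if n is odd. -/
open Polynomial
noncomputable def S (n : ℕ) : ℚ[X] :=
  C ((n : ℚ) + 1)⁻¹ * (Polynomial.bernoulli (n + 1) - C (_root_.bernoulli (n + 1)))

lemma S1_eq : S 1 = C (2⁻¹:ℚ) * (X^2 - X) := by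
  simp [S, Polynomial.bernoulli, Finset.sum_range_succ, _root_.bernoulli_one]
  ring_nf
  ext k
  simp [coeff_monomial, coeff_C_mul, coeff_X_pow, coeff_X, ← C_pow, mul_sub]
  rcases k with _|_|k <;> norm_num <;> split_ifs <;> first | omega | norm_num

lemma deriv_S (k : ℕ) :
    derivative (S (k+1)) = C ((k:ℚ)+1) * S k + C (_root_.bernoulli (k+1)) := by
  have hb : C ((k:ℚ)+1) * S k + C (_root_.bernoulli (k+1)) = Polynomial.bernoulli (k+1) := by
    rw [S, ← mul_assoc, ← C_mul, mul_inv_cancel₀ (show ((k:ℚ)+1) ≠ 0 by positivity), C_1,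
      one_mul]
    ring
  rw [hb, S, derivative_C_mul, derivative_sub, derivative_C, sub_zero,
    show k+1+1 = (k+1)+1 from rfl, derivative_bernoulli_add_one]
  have hcast : (((k+1 : ℕ) : ℚ[X]) + 1) = C ((k:ℚ)+1+1) := by
    push_cast
    simp [C_eq_natCast]
  rw [hcast, ← mul_assoc, ← C_mul,
    show ((((k+1):ℕ):ℚ)+1)⁻¹ * ((k:ℚ)+1+1) = 1 from by push_cast; field_simp, C_1, one_mul]

noncomputable def L (P : ℚ[X]) : ℚ[X] :=
  (C 2 * X + C (4⁻¹:ℚ)) * derivative (derivative P) + derivative P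

lemma L_add (P Q : ℚ[X]) : L (P + Q) = L P + L Q := by
  simp only [L, derivative_add]; ring

lemma u_deriv : derivative (S 1) = X - C (2⁻¹:ℚ) := by
  rw [S1_eq, derivative_C_mul, derivative_sub, derivative_X_pow, derivative_X]
  ext k
  rcases k with _|_|k <;>
    simp [coeff_C_mul, coeff_sub, coeff_X, coeff_C, coeff_X_pow, coeff_one] <;> norm_num

lemma u_sq : (X - C (2⁻¹:ℚ))^2 = (C 2 * X + C (4⁻¹:ℚ)).comp (S 1) := by
  rw [add_comp, mul_comp, C_comp, C_comp, X_comp, S1_eq]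
  ext k
  simp [coeff_C_mul, coeff_X, coeff_C, coeff_X_pow, sub_sq, coeff_one, mul_sub, ← C_pow,
    ← C_mul]
  rcases k with _|_|_|k <;> norm_num <;> split_ifs <;> first | omega | norm_num

lemma comp_dd (P : ℚ[X]) :
    derivative (derivative (P.comp (S 1))) = (L P).comp (S 1) := by
  rw [L, add_comp, mul_comp, ← u_sq, derivative_comp, u_deriv, derivative_mul,
    derivative_comp, u_deriv, derivative_sub, derivative_X, derivative_C, sub_zero]
  ring

lemma bern_num (n : ℕ) (h : 3 ≤ n) (ho : Odd n) : _root_.bernoulli n = 0 := by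
  rw [bernoulli_eq_bernoulli'_of_ne_one (by omega)]
  exact bernoulli'_eq_zero_of_odd ho (by omega)

lemma S2_eq : S 2 = C (6⁻¹:ℚ) * (2*X^3 - 3*X^2 + X) := by
  simp [S, Polynomial.bernoulli, Finset.sum_range_succ, _root_.bernoulli_one,
    bernoulli_eq_bernoulli'_of_ne_one, bernoulli'_two]
  ring_nf
  ext k
  simp [coeff_monomial, coeff_C_mul, coeff_X_pow, coeff_X, ← C_pow, mul_sub, mul_add]
  rcases k with _|_|_|k <;> norm_num <;> split_ifs <;> first | omega | norm_num

set_option maxRecDepth 10000 in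
lemma S3_eq : S 3 = (S 1)^2 := by
  rw [S1_eq]
  simp [S, Polynomial.bernoulli, Finset.sum_range_succ, _root_.bernoulli_one,
    bernoulli_eq_bernoulli'_of_ne_one, bernoulli'_two, bernoulli'_three, bernoulli'_four]
  ring_nf
  ext k
  simp [coeff_monomial, coeff_C_mul, coeff_X_pow, coeff_X, ← C_pow, mul_sub, sub_mul, mul_add]
  rcases k with _|_|_|_|_|k <;> norm_num [Nat.choose] <;> split_ifs <;> first | omega | norm_num

lemma S_eval_zero (n : ℕ) : (S n).eval 0 = 0 := by simp [S]

lemma S_eval_one (n : ℕ) (hn : 1 ≤ n) : (S n).eval 1 = 0 := by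
  simp [S, bernoulli_eq_bernoulli'_of_ne_one (show n + 1 ≠ 1 by omega)]

lemma u_eval_zero : (S 1).eval 0 = 0 := S_eval_zero 1
lemma u_eval_one : (S 1).eval 1 = 0 := S_eval_one 1 le_rfl

lemma u_mul : S 1 * (X - C (2⁻¹:ℚ)) = C ((3:ℚ)/2) * S 2 := by
  rw [S1_eq, S2_eq]
  have h1 : (C (2⁻¹:ℚ)) * C (2⁻¹:ℚ) = C (4⁻¹:ℚ) := by rw [← C_mul]; norm_num
  have h2 : (C (2⁻¹:ℚ)) = 2 * C (4⁻¹:ℚ) := by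
    rw [show ((2:ℚ[X])) = C 2 from rfl, ← C_mul]; norm_num
  have h3 : (C ((3:ℚ)/2)) * C (6⁻¹:ℚ) = C (4⁻¹:ℚ) := by rw [← C_mul]; norm_num
  linear_combination (-(X^2 - X)) * h1 + (X^3 - X^2) * h2 - (2*X^3 - 3*X^2 + X) * h3

lemma L_CX (c : ℚ) (N : ℕ) : L (C c * X^(N+2)) =
    C (c*((N:ℚ)+2)*(2*(N:ℚ)+3)) * X^(N+1) + C (c*((N:ℚ)+2)*((N:ℚ)+1)/4) * X^N := by
  have e1 : derivative (C c * X^(N+2)) = C (c*((N:ℚ)+2)) * X^(N+1) := by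
    rw [derivative_C_mul, derivative_X_pow, ← mul_assoc, ← C_mul]
    norm_num
  have e2 : derivative (derivative (C c * X^(N+2))) = C (c*((N:ℚ)+2)*((N:ℚ)+1)) * X^N := by
    rw [e1, derivative_C_mul, derivative_X_pow, ← mul_assoc, ← C_mul]
    norm_num
  rw [L, e2, e1]
  have hc3 : C (c*((N:ℚ)+2)*(2*(N:ℚ)+3)) =
      C 2 * C (c*((N:ℚ)+2)*((N:ℚ)+1)) + C (c*((N:ℚ)+2)) := by
    rw [← C_mul, ← C_add]; congr 1; ring
  have hc4 : C (c*((N:ℚ)+2)*((N:ℚ)+1)/4) = C (4⁻¹:ℚ) * C (c*((N:ℚ)+2)*((N:ℚ)+1)) := by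
    rw [← C_mul]; congr 1; ring
  rw [hc3, hc4, pow_succ]
  ring

lemma solve_L (N : ℕ) : ∀ Q : ℚ[X], Q.natDegree ≤ N →
    ∃ P : ℚ[X], L P = Q ∧ P.coeff 0 = 0 ∧ P.natDegree ≤ Q.natDegree + 1 ∧
      (Q ≠ 0 → P.natDegree = Q.natDegree + 1) := by
  induction N with
  | zero =>
    intro Q hQ
    have hQc : Q = C (Q.coeff 0) := eq_C_of_natDegree_le_zero hQ
    refine ⟨C (Q.coeff 0) * X, ?_, by simp, ?_, ?_⟩
    · simp [L]; exact hQc.symm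
    · rcases eq_or_ne (Q.coeff 0) 0 with h | h
      · simp [h]
      · rw [natDegree_C_mul_X _ h]; omega
    · intro hQ0
      have h : Q.coeff 0 ≠ 0 := fun h => hQ0 (by rw [hQc, h, map_zero])
      rw [natDegree_C_mul_X _ h, Nat.eq_zero_of_le_zero hQ, zero_add]
  | succ N ih =>
    intro Q hQ
    by_cases hQN : Q.natDegree ≤ N
    · exact ih Q hQN
    have hd : Q.natDegree = N + 1 := le_antisymm hQ (by omega)
    have hQ0 : Q ≠ 0 := fun h => by simp [h] at hd
    have hlc : Q.leadingCoeff ≠ 0 := leadingCoeff_ne_zero.2 hQ0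
    set a : ℚ := Q.leadingCoeff / (((N:ℚ)+2)*(2*N+3)) with ha
    have hden : (((N:ℚ)+2)*(2*N+3)) ≠ 0 := by positivity
    have ha0 : a ≠ 0 := div_ne_zero hlc hden
    set P₀ : ℚ[X] := C a * X^(N+2) with hP₀
    have hlcC : C Q.leadingCoeff = C (a*((N:ℚ)+2)*(2*(N:ℚ)+3)) := by
      congr 1; rw [ha]; field_simp
    have hLP₀ : L P₀ = C Q.leadingCoeff * X^(N+1) + C (a*((N:ℚ)+2)*((N:ℚ)+1)/4) * X^N := by
      rw [hP₀, L_CX, hlcC]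
    set R : ℚ[X] := Q - L P₀ with hR
    have hLdeg : (L P₀).natDegree ≤ N + 1 := by
      rw [hLP₀]
      refine (natDegree_add_le _ _).trans ?_
      simp only [sup_le_iff]
      constructor
      · exact (natDegree_C_mul_le _ _).trans (by simp)
      · exact (natDegree_C_mul_le _ _).trans (by simp)
    have hRdeg : R.natDegree ≤ N := by
      rw [natDegree_le_iff_coeff_eq_zero]
      intro M hM
      rcases eq_or_lt_of_le (show N + 1 ≤ M by omega) with h | h
      · subst h
        have hcoeff : (L P₀).coeff (N+1) = Q.leadingCoeff := by
          rw [hLP₀, coeff_add, coeff_C_mul, coeff_C_mul, coeff_X_pow, coeff_X_pow,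
            if_pos rfl, if_neg (by omega)]
          simp
        have hQco : Q.coeff (N+1) = Q.leadingCoeff := by
          rw [← hd]; exact coeff_natDegree
        rw [hR, coeff_sub, hcoeff, hQco, sub_self]
      · have h1 : Q.coeff M = 0 := coeff_eq_zero_of_natDegree_lt (by omega)
        have h2 : (L P₀).coeff M = 0 := coeff_eq_zero_of_natDegree_lt (by omega)
        rw [hR, coeff_sub, h1, h2, sub_self]
    obtain ⟨P₁, hL1, hc1, hdeg1, _⟩ := ih R hRdeg
    have hP₀deg : P₀.natDegree = N + 2 := by
      rw [hP₀, natDegree_C_mul ha0, natDegree_X_pow]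
    have hsum : (P₀ + P₁).natDegree = N + 2 := by
      rw [natDegree_add_eq_left_of_natDegree_lt, hP₀deg]
      rw [hP₀deg]
      omega
    refine ⟨P₀ + P₁, ?_, ?_, ?_, fun _ => by omega⟩
    · rw [L_add, hL1, hR]; ring
    · rw [coeff_add, hc1, hP₀, coeff_C_mul, coeff_X_pow, if_neg (by omega)]
      simp
    · omega

lemma odd_key : ∀ m : ℕ, 1 ≤ m → ∃ P : ℚ[X],
    P.coeff 0 = 0 ∧ P.coeff 1 = 0 ∧ P.natDegree = m + 1 ∧ S (2*m+1) = P.comp (S 1) := by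
  intro m hm
  induction m, hm using Nat.le_induction with
  | base =>
    refine ⟨X^2, by simp, by simp, by simp, ?_⟩
    rw [show (2*1+1 : ℕ) = 3 from rfl, S3_eq, pow_comp, X_comp]
  | succ m hm ih =>
    obtain ⟨P, hc0, hc1, hdeg, hS⟩ := ih
    have key1 : derivative (S (2*m+3)) = C ((2*(m:ℚ)+3)) * S (2*m+2) := by
      have h := deriv_S (2*m+2)
      rw [bern_num (2*m+2+1) (by omega) ⟨m+1, by ring⟩] at h
      rw [show 2*m+2+1 = 2*m+3 from rfl] at h
      rw [h, map_zero, add_zero]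
      congr 1
      push_cast
      ring
    have key2 : derivative (S (2*m+2)) =
        C ((2*(m:ℚ)+2)) * S (2*m+1) + C (_root_.bernoulli (2*m+2)) := by
      have h := deriv_S (2*m+1)
      rw [show 2*m+1+1 = 2*m+2 from rfl] at h
      rw [h]
      congr 2
      push_cast
      ring
    set b : ℚ := _root_.bernoulli (2*m+2) with hb
    set Q : ℚ[X] := C ((2*(m:ℚ)+3) * (2*(m:ℚ)+2)) * P + C ((2*(m:ℚ)+3) * b) with hQ
    have hQdeg : Q.natDegree = m + 1 := by
      rw [hQ, natDegree_add_C, natDegree_C_mul (by positivity), hdeg]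
    have hQ0 : Q ≠ 0 := fun h => by simp [h] at hQdeg
    have hdd : derivative (derivative (S (2*m+3))) = Q.comp (S 1) := by
      rw [key1, derivative_C_mul, key2, hS, hQ, add_comp, mul_comp, C_comp, C_comp,
        C_mul, C_mul]
      ring
    obtain ⟨R, hLR, hR0, _, hRdeg⟩ := solve_L (m+1) Q hQdeg.le
    have hRdeg' : R.natDegree = m + 2 := by rw [hRdeg hQ0, hQdeg]
    set D : ℚ[X] := S (2*m+3) - R.comp (S 1) with hD
    have hDdd : derivative (derivative D) = 0 := by
      rw [hD, derivative_sub, derivative_sub, hdd, comp_dd, hLR, sub_self]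
    have hD1 : derivative D = C ((derivative D).coeff 0) :=
      eq_C_of_natDegree_eq_zero (natDegree_eq_zero_of_derivative_eq_zero hDdd)
    set a : ℚ := (derivative D).coeff 0 with haa
    have hD2 : derivative (D - C a * X) = 0 := by
      rw [derivative_sub, derivative_C_mul, derivative_X, mul_one, ← hD1, sub_self]
    have hD3 : D - C a * X = C ((D - C a * X).coeff 0) :=
      eq_C_of_natDegree_eq_zero (natDegree_eq_zero_of_derivative_eq_zero hD2)
    set c : ℚ := (D - C a * X).coeff 0 with hcc
    have hDform : D = C a * X + C c := by
      rw [sub_eq_iff_eq_add] at hD3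
      rw [hD3]; ring
    have hDeval0 : D.eval 0 = 0 := by
      rw [hD, eval_sub, S_eval_zero, eval_comp, u_eval_zero, ← coeff_zero_eq_eval_zero, hR0]
      ring
    have hDeval1 : D.eval 1 = 0 := by
      rw [hD, eval_sub, S_eval_one _ (by omega), eval_comp, u_eval_one,
        ← coeff_zero_eq_eval_zero, hR0]
      ring
    have hc0' : c = 0 := by
      have h := hDeval0
      rw [hDform] at h
      simpa using h
    have ha0' : a = 0 := by
      have h := hDeval1
      rw [hDform, hc0'] at h
      simpa using h
    have hSR : S (2*m+3) = R.comp (S 1) := by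
      have h : D = 0 := by rw [hDform, ha0', hc0']; simp
      rw [hD, sub_eq_zero] at h
      exact h
    have hR1 : R.coeff 1 = 0 := by
      have he : (derivative (S (2*m+3))).eval 0 = 0 := by
        rw [key1, eval_mul, S_eval_zero, mul_zero]
      rw [hSR, derivative_comp, u_deriv] at he
      rw [eval_mul, eval_sub, eval_X, eval_C, eval_comp, u_eval_zero] at he
      have hco : (derivative R).eval 0 = R.coeff 1 := by
        rw [← coeff_zero_eq_eval_zero, coeff_derivative]
        norm_num
      rw [hco] at he
      field_simp at he
      linarith
    exact ⟨R, hR0, hR1, hRdeg'.trans (by ring),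
      by rw [show 2*(m+1)+1 = 2*m+3 by ring]; exact hSR⟩

theorem faulhaber_jacobi (n : ℕ) (hn : 2 ≤ n) :
    ∃ F : ℚ[X], F.natDegree = n / 2 - 1 ∧
      S n = (if Even n then S 2 else (S 1) ^ 2) * F.comp (S 1) := by
  rcases Nat.even_or_odd n with he | ho
  · obtain ⟨m, hm⟩ := he
    have hm1 : 1 ≤ m := by omega
    have hn2m : n = 2 * m := by omega
    obtain ⟨P, hc0, hc1, hdeg, hS⟩ := odd_key m hm1
    have hP0 : P ≠ 0 := fun h => by simp [h] at hdeg
    have key : derivative (S (2*m+1)) = C ((2*(m:ℚ)+1)) * S (2*m) := by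
      have h := deriv_S (2*m)
      rw [bern_num (2*m+1) (by omega) ⟨m, by ring⟩] at h
      rw [h, map_zero, add_zero]
      congr 1
      push_cast
      ring
    have hP'0 : (derivative P).coeff 0 = 0 := by
      rw [coeff_derivative, hc1]; ring
    set E : ℚ[X] := (derivative P).divX with hE
    have hPE : derivative P = E * X := by
      have h := divX_mul_X_add (derivative P)
      rw [hP'0, map_zero, add_zero] at h
      exact h.symm
    have hEdeg : E.natDegree = m - 1 := by
      have h1 : (derivative P).natDegree = m := by
        apply le_antisymm
        · have := natDegree_derivative_le P
          omega
        · apply le_natDegree_of_ne_zero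
          rw [coeff_derivative]
          have hne : P.coeff (m+1) ≠ 0 := by
            rw [← hdeg, coeff_natDegree]
            exact leadingCoeff_ne_zero.2 hP0
          exact mul_ne_zero hne (by positivity)
      rw [hE, natDegree_divX_eq_natDegree_tsub_one, h1]
    have hmain : C ((2*(m:ℚ)+1)) * S (2*m) = C ((3:ℚ)/2) * S 2 * E.comp (S 1) := by
      rw [← key, hS, derivative_comp, u_deriv, hPE, mul_comp, X_comp, ← u_mul]
      ring
    set F : ℚ[X] := C ((2*(m:ℚ)+1)⁻¹ * ((3:ℚ)/2)) * E with hF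
    have hne : (2*(m:ℚ)+1) ≠ 0 := by positivity
    refine ⟨F, ?_, ?_⟩
    · rw [hF, natDegree_C_mul (by positivity), hEdeg, hn2m]
      omega
    · rw [if_pos (by rw [hn2m]; exact even_two_mul m)]
      have hfin : S (2*m) = C ((2*(m:ℚ)+1)⁻¹) * (C ((3:ℚ)/2) * S 2 * E.comp (S 1)) := by
        rw [← hmain, ← mul_assoc, ← C_mul, inv_mul_cancel₀ hne, C_1, one_mul]
      rw [hn2m, hfin, hF, mul_comp, C_comp, C_mul]
      ring
  · obtain ⟨m, hm⟩ := ho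
    have hm1 : 1 ≤ m := by omega
    obtain ⟨P, hc0, hc1, hdeg, hS⟩ := odd_key m hm1
    have hP0 : P ≠ 0 := fun h => by simp [h] at hdeg
    set F : ℚ[X] := P.divX.divX with hF
    have h1 : P = P.divX * X := by
      have h := divX_mul_X_add P
      rw [hc0, map_zero, add_zero] at h
      exact h.symm
    have h2 : P.divX = F * X := by
      have h := divX_mul_X_add P.divX
      rw [coeff_divX, hc1, map_zero, add_zero] at h
      exact h.symm
    have hPF : P = F * X^2 := by
      rw [h1, h2]; ring
    have hFdeg : F.natDegree = m - 1 := by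
      rw [hF, natDegree_divX_eq_natDegree_tsub_one, natDegree_divX_eq_natDegree_tsub_one,
        hdeg]
      omega
    refine ⟨F, ?_, ?_⟩
    · rw [hFdeg, hm]
      omega
    · rw [if_neg (by rw [hm, Nat.even_iff]; omega)]
      rw [hm, hS, hPF, mul_comp, pow_comp, X_comp]
      ring
end

section
/- The constant term of the Faulhaber polynomial satisfies F_n(0) = 6·B_n when n ≥ 2 is even, and F_n(0) = 2n·B_{n-1} when n ≥ 3 is odd; moreover F_n(1) = 1 for all n ≥ 2. -/
open Polynomial

lemma dS (n : ℕ) : derivative (S n) = Polynomial.bernoulli n := by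
  have h : ((n:ℚ)+1) ≠ 0 := by positivity
  rw [S, derivative_C_mul, derivative_sub, derivative_C, sub_zero,
    Polynomial.derivative_bernoulli_add_one, ← mul_assoc, ← C_eq_natCast,
    show (C (n:ℚ) + 1 : ℚ[X]) = C ((n:ℚ)+1) by simp,
    ← C_mul, inv_mul_cancel₀ h, C_1, one_mul]

lemma S_eval_two (n : ℕ) (hn : 1 ≤ n) : (S n).eval 2 = 1 := by
  have h : ((n:ℚ)+1) ≠ 0 := by positivity
  obtain ⟨p, rfl⟩ := Nat.exists_eq_add_of_le hn
  have h2 := Polynomial.bernoulli_succ_eval 2 (1 + p)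
  simp only [S, eval_mul, eval_C, eval_sub]
  rw [show ((2:ℚ)) = ((2:ℕ):ℚ) by norm_num, show (1+p)+1 = (1+p).succ from rfl, h2]
  have hs : ∑ k ∈ Finset.range 2, (k : ℚ) ^ (1+p) = 1 := by
    simp [Finset.sum_range_succ]
  rw [hs]
  push_cast
  field_simp
  ring

lemma bernoulli_two' : _root_.bernoulli 2 = 1/6 := by
  rw [bernoulli_eq_bernoulli'_of_ne_one (by norm_num), bernoulli'_two]

theorem faulhaber_special_values (n : ℕ) (F : ℚ[X]) :
    (2 ≤ n → Even n → S n = S 2 * F.comp (S 1) →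
      F.eval 0 = 6 * _root_.bernoulli n ∧ F.eval 1 = 1) ∧
    (3 ≤ n → Odd n → S n = (S 1) ^ 2 * F.comp (S 1) →
      F.eval 0 = 2 * n * _root_.bernoulli (n - 1) ∧ F.eval 1 = 1) := by
  constructor
  · intro hn _ h
    constructor
    · have hd := congrArg derivative h
      rw [dS n] at hd
      have he := congrArg (eval 0) hd
      simp [derivative_mul, eval_mul, eval_add, dS, S_eval_zero,
        Polynomial.bernoulli_eval_zero, eval_comp, bernoulli_two'] at he
      linarith
    · have he := congrArg (eval 2) h
      rw [S_eval_two n (by omega), eval_mul, S_eval_two 2 (by norm_num), eval_comp,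
        S_eval_two 1 (by norm_num), one_mul] at he
      exact he.symm
  · intro hn _ h
    constructor
    · have hd := congrArg (fun p => derivative (derivative p)) h
      simp only [dS n, Polynomial.derivative_bernoulli] at hd
      have he := congrArg (eval 0) hd
      simp [derivative_mul, derivative_pow, eval_mul, eval_add, dS, S_eval_zero,
        Polynomial.bernoulli_eval_zero, eval_comp, _root_.bernoulli_one,
        Polynomial.bernoulli_eval_zero] at he
      linear_combination -2 * he
    · have he := congrArg (eval 2) h
      rw [S_eval_two n (by omega), eval_mul, eval_pow, S_eval_two 1 (by norm_num), eval_comp,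
        S_eval_two 1 (by norm_num), one_pow, one_mul] at he
      exact he.symm
end

section
/- For odd n ≥ 3, the leading coefficient of the Faulhaber polynomial F_n equals 2^{(n+1)/2}/(n+1). -/
open Polynomial

lemma bernoulli_natDegree_le (n : ℕ) : (Polynomial.bernoulli n).natDegree ≤ n := by
  rw [Polynomial.bernoulli_def]
  refine natDegree_sum_le_of_forall_le _ _ fun i hi => ?_
  exact (natDegree_monomial_le _).trans (Nat.lt_succ_iff.mp (Finset.mem_range.mp hi))

lemma bernoulli_coeff_self (n : ℕ) : (Polynomial.bernoulli n).coeff n = 1 := by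
  rw [Polynomial.bernoulli_def, finset_sum_coeff, Finset.sum_range_succ]
  rw [Finset.sum_eq_zero fun i hi => ?_]
  · simp
  · rw [coeff_monomial_of_ne _ (Finset.mem_range.mp hi).ne']

lemma bernoulli_poly_monic (n : ℕ) : (Polynomial.bernoulli n).Monic :=
  monic_of_natDegree_le_of_coeff_eq_one n (bernoulli_natDegree_le n) (bernoulli_coeff_self n)

lemma bernoulli_natDegree (n : ℕ) : (Polynomial.bernoulli n).natDegree = n :=
  le_antisymm (bernoulli_natDegree_le n)
    (le_natDegree_of_ne_zero (by rw [bernoulli_coeff_self]; exact one_ne_zero))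

lemma bern_sub_monic (n : ℕ) :
    (Polynomial.bernoulli (n + 1) - C (_root_.bernoulli (n + 1))).Monic := by
  rw [sub_eq_add_neg]
  refine (bernoulli_poly_monic (n + 1)).add_of_left ?_
  have h1 : degree (-C (_root_.bernoulli (n + 1))) ≤ 0 := by
    rw [degree_neg]; exact degree_C_le
  have h2 : (0 : WithBot ℕ) < degree (Polynomial.bernoulli (n + 1)) := by
    rw [degree_eq_natDegree (bernoulli_poly_monic (n + 1)).ne_zero, bernoulli_natDegree]
    exact_mod_cast Nat.succ_pos n
  exact lt_of_le_of_lt h1 h2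

lemma S_natDegree (n : ℕ) : (S n).natDegree = n + 1 := by
  rw [S, natDegree_C_mul (by positivity : ((n : ℚ) + 1)⁻¹ ≠ 0),
    natDegree_sub_C, bernoulli_natDegree]

lemma S_lc (n : ℕ) : (S n).leadingCoeff = ((n : ℚ) + 1)⁻¹ := by
  rw [S, leadingCoeff_mul, leadingCoeff_C, (bern_sub_monic n).leadingCoeff, mul_one]

theorem faulhaber_leading_coeff (n : ℕ) (hn : 3 ≤ n) (hodd : Odd n)
    (F : ℚ[X]) (hF : S n = (S 1) ^ 2 * F.comp (S 1)) :
    F.leadingCoeff = 2 ^ ((n + 1) / 2) / ((n : ℚ) + 1) := by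
  have h1 : (S 1).natDegree = 2 := S_natDegree 1
  have hSn0 : S n ≠ 0 := fun h => by
    have := S_lc n
    rw [h, leadingCoeff_zero] at this
    exact (by positivity : ((n : ℚ) + 1)⁻¹ ≠ 0) this.symm
  have hF0 : F ≠ 0 := fun h => by simp [h] at hF; exact hSn0 hF
  -- degrees
  have hdeg : n + 1 = 2 * 2 + F.natDegree * 2 := by
    have := congrArg natDegree hF
    rwa [S_natDegree n, natDegree_mul (pow_ne_zero 2 (fun h => hSn0 (by simp [hF, h]))) ?_,
      natDegree_pow, natDegree_comp, S_natDegree 1] at this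
    · intro h
      rw [comp_eq_zero_iff] at h
      rcases h with h | h
      · exact hF0 h
      · have := h.2
        have h2 : (S 1).natDegree = 0 := by rw [this]; simp
        rw [h1] at h2; exact two_ne_zero h2
  have hdF : F.natDegree = (n - 3) / 2 := by omega
  -- leading coefficients
  have hlc := congrArg leadingCoeff hF
  rw [S_lc n, leadingCoeff_mul, leadingCoeff_pow, S_lc 1,
    leadingCoeff_comp (by rw [h1]; norm_num), S_lc 1] at hlc
  have hcast : ((1 : ℕ) : ℚ) + 1 = 2 := by norm_num
  rw [hcast] at hlc
  have key : ((n : ℚ) + 1)⁻¹ = (2 : ℚ)⁻¹ ^ 2 * (F.leadingCoeff * (2 : ℚ)⁻¹ ^ F.natDegree) := hlc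
  have hne : ((n : ℚ) + 1) ≠ 0 := by positivity
  have hexp : F.natDegree + 2 = (n + 1) / 2 := by
    obtain ⟨k, hk⟩ := hodd; omega
  rw [eq_div_iff hne, ← hexp]
  field_simp at key ⊢
  rw [pow_add]
  have h2 : ((1:ℚ)/2)^F.natDegree * 2^F.natDegree = 1 := by rw [← mul_pow]; norm_num
  linear_combination (-(2:ℚ)^F.natDegree) * key + (-((n:ℚ)+1) * F.leadingCoeff) * h2
end

section
/- For odd n ≥ 3 and 0 ≤ ℓ ≤ (n-3)/2, the coefficients of the Faulhaber polynomial satisfy (n choose (ℓ+1))·B_{n-(ℓ+1)} = (ℓ+2)·Σ_{k=0}^{ℓ} ((k+2) choose (ℓ-k)) · (1/2)^{k+2} · f_{n,k}. -/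
open Polynomial

lemma S_one_eq : S 1 = C (1/2 : ℚ) * ((X - 1) * X) := by
  have h1 : (C (1/2 : ℚ) * 2 : ℚ[X]) = 1 := by
    rw [show ((2:ℚ[X])) = C 2 from (map_ofNat C 2).symm, ← C_mul]
    norm_num
  norm_num [S, Polynomial.bernoulli, Finset.sum_range_succ, ← C_mul_X_pow_eq_monomial,
    _root_.bernoulli_one, _root_.bernoulli_zero, C_1, C_neg]
  linear_combination (-X : ℚ[X]) * h1

lemma coeff_S1_pow (m j : ℕ) :
    ((S 1) ^ m).coeff j
      = if m ≤ j then (1/2:ℚ)^m * (-1)^j * ((m.choose (j - m) : ℚ)) else 0 := by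
  rw [S_one_eq, mul_pow, mul_pow, ← C_pow, mul_assoc, coeff_C_mul, coeff_mul_X_pow']
  split_ifs with h
  · have hX : (X - 1 : ℚ[X]) = X + C (-1) := by simp [sub_eq_add_neg]
    rw [hX, coeff_X_add_C_pow]
    rcases le_or_gt (j - m) m with h2 | h2
    · have hs : ((-1:ℚ)) ^ (m - (j - m)) = (-1) ^ j := by
        rw [neg_one_pow_eq_pow_mod_two, neg_one_pow_eq_pow_mod_two (n := j)]
        congr 1
        omega
      rw [hs]; try ring
    · rw [Nat.choose_eq_zero_of_lt h2]
      simp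
  · exact mul_zero _

lemma coeff_bernoulli_poly (N j : ℕ) (hj : j < N + 1) :
    (Polynomial.bernoulli N).coeff j = _root_.bernoulli (N - j) * (N.choose j) := by
  rw [Polynomial.bernoulli_def, finset_sum_coeff, Finset.sum_eq_single j]
  · simp [coeff_monomial]
  · intro b _ hb
    simp [coeff_monomial, hb]
  · intro h
    exact absurd (Finset.mem_range.mpr hj) h

theorem faulhaber_coeff_bernoulli_recurrence (n : ℕ) (hn : 3 ≤ n) (hodd : Odd n)
    (F : ℚ[X]) (hF : S n = (S 1) ^ 2 * F.comp (S 1))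
    (ℓ : ℕ) (hℓ : ℓ ≤ (n - 3) / 2) :
    (n.choose (ℓ + 1) : ℚ) * _root_.bernoulli (n - (ℓ + 1))
      = (ℓ + 2) * ∑ k ∈ Finset.range (ℓ + 1),
          ((k + 2).choose (ℓ - k) : ℚ) * (1 / 2 : ℚ) ^ (k + 2) * F.coeff k := by
  have h2ℓ : 2 * ℓ + 3 ≤ n := by omega
  set T : ℚ := ∑ k ∈ Finset.range (ℓ + 1),
      ((k + 2).choose (ℓ - k) : ℚ) * (1 / 2 : ℚ) ^ (k + 2) * F.coeff k with hT
  set B : ℚ := _root_.bernoulli (n - (ℓ + 1)) with hB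
  have hc := congrArg (fun p : ℚ[X] => p.coeff (ℓ + 2)) hF
  -- left side of hc
  have hL : (S n).coeff (ℓ + 2)
      = ((n : ℚ) + 1)⁻¹ * (B * (((n+1).choose (ℓ + 2) : ℕ) : ℚ)) := by
    rw [S, coeff_C_mul, coeff_sub, coeff_C, if_neg (by omega),
      coeff_bernoulli_poly (n+1) (ℓ+2) (by omega), sub_zero]
    have : n + 1 - (ℓ + 2) = n - (ℓ + 1) := by omega
    rw [this]
  -- right side of hc
  have hR : ((S 1) ^ 2 * F.comp (S 1)).coeff (ℓ + 2) = (-1 : ℚ) ^ ℓ * T := by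
    have hcomp : (S 1) ^ 2 * F.comp (S 1) = F.sum fun k a => C a * (S 1) ^ (k + 2) := by
      rw [comp_eq_sum_left, Polynomial.sum, Polynomial.sum, Finset.mul_sum]
      apply Finset.sum_congr rfl
      intro k _
      ring
    rw [hcomp, Polynomial.sum, finset_sum_coeff]
    simp only [coeff_C_mul]
    have e1 : ∑ k ∈ F.support, F.coeff k * ((S 1) ^ (k + 2)).coeff (ℓ + 2)
        = ∑ k ∈ F.support ∪ Finset.range (ℓ + 1),
            F.coeff k * ((S 1) ^ (k + 2)).coeff (ℓ + 2) := by
      apply Finset.sum_subset Finset.subset_union_left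
      intro x _ hxs
      rw [Polynomial.notMem_support_iff.mp hxs, zero_mul]
    have e2 : ∑ k ∈ Finset.range (ℓ + 1), F.coeff k * ((S 1) ^ (k + 2)).coeff (ℓ + 2)
        = ∑ k ∈ F.support ∪ Finset.range (ℓ + 1),
            F.coeff k * ((S 1) ^ (k + 2)).coeff (ℓ + 2) := by
      apply Finset.sum_subset Finset.subset_union_right
      intro x _ hxr
      have hx : ℓ + 1 ≤ x := by
        by_contra hcon
        exact hxr (Finset.mem_range.mpr (by omega))
      rw [coeff_S1_pow, if_neg (by omega), mul_zero]
    rw [e1, ← e2, hT, Finset.mul_sum]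
    apply Finset.sum_congr rfl
    intro k hk
    have hk' : k ≤ ℓ := by
      have := Finset.mem_range.mp hk
      omega
    rw [coeff_S1_pow, if_pos (by omega)]
    have h1 : ℓ + 2 - (k + 2) = ℓ - k := by omega
    have h2 : ((-1 : ℚ)) ^ (ℓ + 2) = (-1) ^ ℓ := by
      rw [pow_add]
      norm_num
    rw [h1, h2]
    ring
  rw [hL, hR] at hc
  have hch : (((n+1).choose (ℓ + 2) : ℕ) : ℚ) * ((ℓ : ℚ) + 2)
      = ((n : ℚ) + 1) * (n.choose (ℓ + 1) : ℚ) := by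
    have h : (n+1).choose (ℓ + 2) * (ℓ + 2) = (n + 1) * n.choose (ℓ + 1) :=
      (Nat.add_one_mul_choose_eq n (ℓ + 1)).symm
    exact_mod_cast congrArg (Nat.cast : ℕ → ℚ) h
  have hne : ((n : ℚ) + 1) ≠ 0 := by positivity
  have hinv : ((n : ℚ) + 1)⁻¹ * ((n : ℚ) + 1) = 1 := inv_mul_cancel₀ hne
  rcases Nat.even_or_odd ℓ with he | ho
  · rw [Even.neg_one_pow he, one_mul] at hc
    rw [← hc]
    linear_combination (-(((n : ℚ) + 1)⁻¹ * B)) * hch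
      - ((n.choose (ℓ + 1) : ℚ) * B) * hinv
  · have hBz : B = 0 := by
      rw [hB, bernoulli_eq_bernoulli'_of_ne_one (by omega)]
      refine bernoulli'_eq_zero_of_odd ?_ (by omega)
      exact Nat.Odd.sub_even (by omega) hodd (Odd.add_one ho)
    rw [hBz, zero_mul, mul_zero] at hc
    have hTz : T = 0 := by
      rcases mul_eq_zero.mp hc.symm with h | h
      · exact absurd h (pow_ne_zero _ (by norm_num))
      · exact h
    rw [hBz, hTz, mul_zero, mul_zero]
end

section
/- For n, k ≥ ℓ ≥ 0, the ℓth derivative of the reciprocal Bernoulli polynomial B_{n,k}(x) = x^k·B_n(1/x) at x = 1 equals (-1)^n · ℓ! · Σ_{ν=0}^{ℓ} ((k-ν) choose (k-ℓ)) · (n choose ν) · B_{n-ν}. -/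
/-- The generalized reciprocal Bernoulli polynomial `x ↦ x^k · B_n(x⁻¹)` as a real function. -/
noncomputable def recipBernoulli (n k : ℕ) : ℝ → ℝ :=
  fun x => x ^ k * Polynomial.aeval x⁻¹ (Polynomial.bernoulli n)

section RBAux
open Polynomial Finset


variable {N : WithTop ℕ∞}

lemma rb_zpow_contDiffOn (m : ℤ) :
    ContDiffOn ℝ N (fun x : ℝ => x ^ m) {(0:ℝ)}ᶜ := by
  cases m with
  | ofNat a =>
      simpa [zpow_natCast] using ((contDiff_id (𝕜 := ℝ) (n := N)).pow a).contDiffOn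
  | negSucc a =>
      have h : ContDiffOn ℝ N (fun x : ℝ => x ^ (a+1)) {(0:ℝ)}ᶜ :=
        ((contDiff_id (𝕜 := ℝ) (n := N)).pow (a+1)).contDiffOn
      have h' : ContDiffOn ℝ N (fun x : ℝ => (x ^ (a+1))⁻¹) {(0:ℝ)}ᶜ :=
        h.inv fun x hx => pow_ne_zero _ hx
      simpa [zpow_negSucc] using h'

lemma rb_phi_contDiffOn (ν : ℕ) (m : ℤ) :
    ContDiffOn ℝ N (fun x : ℝ => (x - 1) ^ ν * x ^ m) {(0:ℝ)}ᶜ :=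
  (((contDiff_id.sub contDiff_const).pow ν).contDiffOn).mul (rb_zpow_contDiffOn m)

lemma rb_deriv_phi (ν : ℕ) (m : ℤ) {x : ℝ} (hx : x ≠ 0) :
    deriv (fun x : ℝ => (x - 1) ^ (ν + 1) * x ^ m) x
      = (ν + 1 : ℝ) * ((x - 1) ^ ν * x ^ m)
        + (m : ℝ) * ((x - 1) ^ (ν + 1) * x ^ (m - 1)) := by
  have h1 : HasDerivAt (fun x : ℝ => (x - 1) ^ (ν + 1))
      (((ν : ℝ) + 1) * (x - 1) ^ ν * 1) x := by
    simpa using ((hasDerivAt_id x).sub_const 1).fun_pow (ν + 1)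
  have h2 : HasDerivAt (fun x : ℝ => x ^ m) ((m : ℝ) * x ^ (m - 1)) x :=
    hasDerivAt_zpow m x (Or.inl hx)
  have := (h1.fun_mul h2).deriv
  rw [this]; ring

lemma rb_itDW_eq_itD (f : ℝ → ℝ) (n : ℕ) {x : ℝ} (hx : x ∈ ({(0:ℝ)}ᶜ : Set ℝ)) :
    iteratedDerivWithin n f {(0:ℝ)}ᶜ x = iteratedDeriv n f x := by
  rw [iteratedDerivWithin_eq_iteratedFDerivWithin, iteratedDeriv_eq_iteratedFDeriv,
    iteratedFDerivWithin_of_isOpen n isOpen_compl_singleton hx]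

lemma rb_vanish (ℓ : ℕ) : ∀ ν : ℕ, ∀ m : ℤ, ℓ < ν →
    iteratedDerivWithin ℓ (fun x : ℝ => (x - 1) ^ ν * x ^ m) {(0:ℝ)}ᶜ 1 = 0 := by
  have hso : IsOpen ({(0:ℝ)}ᶜ : Set ℝ) := isOpen_compl_singleton
  have hu : UniqueDiffOn ℝ ({(0:ℝ)}ᶜ : Set ℝ) := hso.uniqueDiffOn
  have h1 : (1:ℝ) ∈ ({(0:ℝ)}ᶜ : Set ℝ) := by norm_num
  induction ℓ with
  | zero =>
      intro ν m hν
      rw [iteratedDerivWithin_zero]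
      simp [zero_pow (by omega : ν ≠ 0)]
  | succ ℓ IH =>
      intro ν m hν
      obtain ⟨ν, rfl⟩ : ∃ ν', ν = ν' + 1 := ⟨ν - 1, by omega⟩
      rw [iteratedDerivWithin_succ']
      have heq : Set.EqOn
          (derivWithin (fun x : ℝ => (x - 1) ^ (ν+1) * x ^ m) ({(0:ℝ)}ᶜ))
          (fun x : ℝ => (ν + 1 : ℝ) * ((x - 1) ^ ν * x ^ m)
            + (m : ℝ) * ((x - 1) ^ (ν+1) * x ^ (m - 1))) ({(0:ℝ)}ᶜ) := by
        intro x hx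
        rw [derivWithin_of_isOpen hso hx, rb_deriv_phi ν m hx]
      rw [iteratedDerivWithin_congr heq h1]
      have cd1 : ContDiffOn ℝ (ℓ : WithTop ℕ∞)
          (fun x : ℝ => (ν + 1 : ℝ) * ((x - 1) ^ ν * x ^ m)) {(0:ℝ)}ᶜ :=
        contDiffOn_const.mul (rb_phi_contDiffOn ν m)
      have cd2 : ContDiffOn ℝ (ℓ : WithTop ℕ∞)
          (fun x : ℝ => (m : ℝ) * ((x - 1) ^ (ν+1) * x ^ (m-1))) {(0:ℝ)}ᶜ :=
        contDiffOn_const.mul (rb_phi_contDiffOn (ν+1) (m-1))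
      have := iteratedDerivWithin_add (n := ℓ) h1 hu (cd1.contDiffWithinAt h1) (cd2.contDiffWithinAt h1)
      have hre : (fun x : ℝ => (ν + 1 : ℝ) * ((x - 1) ^ ν * x ^ m)
            + (m : ℝ) * ((x - 1) ^ (ν+1) * x ^ (m - 1)))
          = (fun x : ℝ => (ν + 1 : ℝ) * ((x - 1) ^ ν * x ^ m))
            + (fun x : ℝ => (m : ℝ) * ((x - 1) ^ (ν+1) * x ^ (m - 1))) := rfl
      rw [hre, this,
        iteratedDerivWithin_const_mul h1 hu _ ((rb_phi_contDiffOn (N := ℓ) ν m).contDiffWithinAt h1),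
        iteratedDerivWithin_const_mul h1 hu _ ((rb_phi_contDiffOn (N := ℓ) (ν+1) (m-1)).contDiffWithinAt h1),
        IH ν m (by omega), IH (ν+1) (m-1) (by omega)]
      ring



lemma rb_itD_polyeval (p : ℝ[X]) (n : ℕ) :
    iteratedDeriv n (fun x => p.eval x) = fun x => (derivative^[n] p).eval x := by
  induction n with
  | zero => simp
  | succ n ih =>
      rw [iteratedDeriv_succ, ih]
      funext x
      rw [Function.iterate_succ_apply']
      exact Polynomial.deriv _

lemma rb_eval_one_iterate_derivative (p : ℝ[X]) (ℓ : ℕ) :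
    (derivative^[ℓ] p).eval 1 = (ℓ.factorial : ℝ) * (taylor 1 p).coeff ℓ := by
  rw [← Polynomial.factorial_smul_hasseDeriv]
  simp only [LinearMap.smul_apply, taylor_coeff]
  rw [nsmul_eq_mul, eval_mul, eval_natCast]

lemma rb_polyterm (k ℓ ν : ℕ) (hν : ν ≤ ℓ) (hℓk : ℓ ≤ k) :
    iteratedDerivWithin ℓ (fun x : ℝ => (x - 1) ^ ν * x ^ ((k:ℤ) - ν)) {(0:ℝ)}ᶜ 1
      = (ℓ.factorial : ℝ) * ((k - ν).choose (k - ℓ)) := by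
  have h1 : (1:ℝ) ∈ ({(0:ℝ)}ᶜ : Set ℝ) := by norm_num
  have hfun : (fun x : ℝ => (x - 1) ^ ν * x ^ ((k:ℤ) - ν))
      = fun x : ℝ => (((X - C 1) ^ ν * X ^ (k - ν) : ℝ[X])).eval x := by
    funext x
    rw [show (k:ℤ) - ν = ((k - ν : ℕ) : ℤ) by omega, zpow_natCast]
    simp
  rw [hfun, rb_itDW_eq_itD _ _ h1, rb_itD_polyeval]
  simp only
  rw [rb_eval_one_iterate_derivative]
  have htay : taylor 1 ((X - C 1) ^ ν * X ^ (k - ν) : ℝ[X])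
      = X ^ ν * (X + 1) ^ (k - ν) := by
    rw [taylor_apply, mul_comp, pow_comp, pow_comp, sub_comp, X_comp, C_comp]
    rw [add_sub_cancel_right]
    norm_num
  rw [htay, show ℓ = (ℓ - ν) + ν by omega, coeff_X_pow_mul, coeff_X_add_one_pow]
  rw [show k - (ℓ - ν + ν) = (k - ν) - (ℓ - ν) by omega, Nat.choose_symm (by omega)]

open Polynomial

lemma bernoulli'_eq_neg_one_pow_mul (m : ℕ) :
    (bernoulli' m : ℚ) = (-1 : ℚ) ^ m * _root_.bernoulli m := by
  rcases eq_or_ne m 1 with rfl | hm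
  · rw [bernoulli'_one, _root_.bernoulli_one]; norm_num
  · rw [← bernoulli_eq_bernoulli'_of_ne_one hm]
    rcases Nat.even_or_odd m with he | ho
    · rw [he.neg_one_pow, one_mul]
    · rcases eq_or_ne m 0 with rfl | h0
      · norm_num
      · have h1 : 1 < m := by omega
        rw [bernoulli_eq_bernoulli'_of_ne_one hm, bernoulli'_eq_zero_of_odd ho h1]
        ring

lemma bernoulli_reflect (n : ℕ) :
    (Polynomial.bernoulli n).comp (1 - X) = (-1 : ℚ[X]) ^ n * Polynomial.bernoulli n := by
  induction n with
  | zero => simp [Polynomial.bernoulli_zero]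
  | succ n ih =>
    set D : ℚ[X] := (Polynomial.bernoulli (n+1)).comp (1 - X)
        - (-1 : ℚ[X]) ^ (n+1) * Polynomial.bernoulli (n+1) with hD
    have hder : derivative D = 0 := by
      rw [hD, derivative_sub, derivative_comp_one_sub_X,
        Polynomial.derivative_bernoulli_add_one, derivative_mul, derivative_pow]
      simp only [derivative_neg, derivative_one, Polynomial.derivative_bernoulli_add_one]
      rw [mul_comp, add_comp, natCast_comp, one_comp, ih]
      ring
    have hdeg : D.natDegree = 0 := natDegree_eq_zero_of_derivative_eq_zero hder
    have hC : D = C (D.coeff 0) := Polynomial.eq_C_of_natDegree_eq_zero hdeg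
    have heval : D.eval 0 = 0 := by
      rw [hD]
      simp only [eval_sub, eval_comp, eval_sub, eval_one, eval_X, sub_zero, eval_mul, eval_pow,
        eval_neg]
      rw [Polynomial.bernoulli_eval_one, Polynomial.bernoulli_eval_zero,
        bernoulli'_eq_neg_one_pow_mul]
      ring
    have : D.coeff 0 = 0 := by
      have := heval
      rw [hC] at this
      simpa using this
    have hD0 : D = 0 := by rw [hC, this, map_zero]
    have := sub_eq_zero.mp hD0
    linear_combination this
lemma rb_itDW_zero_fun (ℓ : ℕ) :
    iteratedDerivWithin ℓ (fun _ : ℝ => (0:ℝ)) {(0:ℝ)}ᶜ 1 = 0 := by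
  have hu : UniqueDiffOn ℝ ({(0:ℝ)}ᶜ : Set ℝ) := isOpen_compl_singleton.uniqueDiffOn
  have h1 : (1:ℝ) ∈ ({(0:ℝ)}ᶜ : Set ℝ) := by norm_num
  rw [iteratedDerivWithin_eq_iteratedFDerivWithin, iteratedFDerivWithin_zero_fun]
  simp

lemma rb_itDW_sum (ℓ : ℕ) (t : Finset ℕ) (F : ℕ → ℝ → ℝ)
    (hF : ∀ i ∈ t, ContDiffOn ℝ (ℓ : WithTop ℕ∞) (F i) {(0:ℝ)}ᶜ) :
    iteratedDerivWithin ℓ (fun x => ∑ i ∈ t, F i x) {(0:ℝ)}ᶜ 1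
      = ∑ i ∈ t, iteratedDerivWithin ℓ (F i) {(0:ℝ)}ᶜ 1 := by
  classical
  have hu : UniqueDiffOn ℝ ({(0:ℝ)}ᶜ : Set ℝ) := isOpen_compl_singleton.uniqueDiffOn
  have h1 : (1:ℝ) ∈ ({(0:ℝ)}ᶜ : Set ℝ) := by norm_num
  induction t using Finset.induction_on with
  | empty => simpa using rb_itDW_zero_fun ℓ
  | @insert a u ha ih =>
      rw [Finset.sum_insert ha]
      have hre : (fun x : ℝ => F a x + ∑ i ∈ u, F i x)
          = F a + fun x : ℝ => ∑ i ∈ u, F i x := rfl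
      have hsum : (fun x : ℝ => ∑ i ∈ u, F i x) = fun x => ∑ i ∈ u, F i x := rfl
      have h2 : iteratedDerivWithin ℓ (fun x : ℝ => F a x + ∑ i ∈ u, F i x) {(0:ℝ)}ᶜ 1
          = iteratedDerivWithin ℓ (F a) {(0:ℝ)}ᶜ 1
            + iteratedDerivWithin ℓ (fun x : ℝ => ∑ i ∈ u, F i x) {(0:ℝ)}ᶜ 1 := by
        rw [hre]
        exact iteratedDerivWithin_add h1 hu ((hF a (Finset.mem_insert_self a u)).contDiffWithinAt h1)
          ((ContDiffOn.sum fun i hi => hF i (Finset.mem_insert_of_mem hi)).contDiffWithinAt h1)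
      rw [show (fun x : ℝ => ∑ i ∈ insert a u, F i x)
          = fun x : ℝ => F a x + ∑ i ∈ u, F i x by
            funext x; rw [Finset.sum_insert ha]]
      rw [h2, ih (fun i hi => hF i (Finset.mem_insert_of_mem hi))]

lemma rb_eqOn (n k : ℕ) :
    Set.EqOn (recipBernoulli n k)
      (fun x : ℝ => ∑ ν ∈ range (n+1),
        ((-1:ℝ)^n * (n.choose ν : ℝ) * ((_root_.bernoulli (n-ν) : ℚ) : ℝ))
          * ((x - 1) ^ ν * x ^ ((k:ℤ) - ν))) {(0:ℝ)}ᶜ := by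
  intro x hx
  have hx0 : x ≠ 0 := hx
  have hrefl : (Polynomial.aeval (x⁻¹ : ℝ)) (Polynomial.bernoulli n)
      = (-1:ℝ)^n * (Polynomial.aeval (1 - x⁻¹ : ℝ)) (Polynomial.bernoulli n) := by
    have h := congrArg (fun p : ℚ[X] => (Polynomial.aeval (1 - x⁻¹ : ℝ)) p) (bernoulli_reflect n)
    simp only [Polynomial.aeval_comp, map_sub, map_one, Polynomial.aeval_X, map_mul, map_pow,
      map_neg, sub_sub_cancel] at h
    rw [h]
  simp only [recipBernoulli]
  rw [hrefl, show (1 - x⁻¹ : ℝ) = (x - 1) * x⁻¹ by field_simp]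
  rw [show Polynomial.bernoulli n
      = (∑ i ∈ range (n+1),
          Polynomial.monomial (n-i) (_root_.bernoulli i * (n.choose i : ℚ)) : ℚ[X])
      from rfl]
  rw [map_sum]
  simp only [Polynomial.aeval_monomial]
  rw [← Finset.sum_range_reflect (fun ν => ((-1:ℝ)^n * (n.choose ν : ℝ)
      * ((_root_.bernoulli (n-ν) : ℚ) : ℝ)) * ((x - 1) ^ ν * x ^ ((k:ℤ) - ν))) (n+1)]
  rw [Finset.mul_sum, Finset.mul_sum]
  refine Finset.sum_congr rfl fun i hi => ?_
  rw [Finset.mem_range] at hi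
  have hi' : i ≤ n := by omega
  rw [show n + 1 - 1 - i = n - i by omega, Nat.choose_symm hi', show n - (n - i) = i by omega]
  rw [map_mul, mul_pow, zpow_sub₀ hx0, zpow_natCast, zpow_natCast, inv_pow]
  rw [show (algebraMap ℚ ℝ) (_root_.bernoulli i) = ((_root_.bernoulli i : ℚ) : ℝ) from rfl,
    show (algebraMap ℚ ℝ) ((n.choose i : ℚ)) = ((n.choose i : ℝ)) by push_cast; rfl]
  rw [div_eq_mul_inv]
  ring

end RBAux

theorem recipBernoulli_iteratedDeriv_one (n k ℓ : ℕ) (hℓn : ℓ ≤ n) (hℓk : ℓ ≤ k) :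
    iteratedDeriv ℓ (recipBernoulli n k) 1
      = (-1) ^ n * (Nat.factorial ℓ : ℝ) *
          ∑ ν ∈ Finset.range (ℓ + 1),
            ((k - ν).choose (k - ℓ) : ℝ) * (n.choose ν : ℝ) *
              ((bernoulli (n - ν) : ℚ) : ℝ) := by
  have hu : UniqueDiffOn ℝ ({(0:ℝ)}ᶜ : Set ℝ) := isOpen_compl_singleton.uniqueDiffOn
  have h1 : (1:ℝ) ∈ ({(0:ℝ)}ᶜ : Set ℝ) := by norm_num
  rw [← rb_itDW_eq_itD _ _ h1]
  rw [iteratedDerivWithin_congr (rb_eqOn n k) h1]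
  rw [rb_itDW_sum ℓ (Finset.range (n+1))
      (fun ν x => ((-1:ℝ)^n * (n.choose ν : ℝ) * ((_root_.bernoulli (n-ν) : ℚ) : ℝ))
        * ((x - 1) ^ ν * x ^ ((k:ℤ) - ν)))
      (fun i _ => contDiffOn_const.mul (rb_phi_contDiffOn i ((k:ℤ) - i)))]
  have hterm : ∀ i ∈ Finset.range (n+1),
      iteratedDerivWithin ℓ
        (fun x : ℝ => ((-1:ℝ)^n * (n.choose i : ℝ) * ((_root_.bernoulli (n-i) : ℚ) : ℝ))
          * ((x - 1) ^ i * x ^ ((k:ℤ) - i))) {(0:ℝ)}ᶜ 1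
      = ((-1:ℝ)^n * (n.choose i : ℝ) * ((_root_.bernoulli (n-i) : ℚ) : ℝ))
          * iteratedDerivWithin ℓ (fun x : ℝ => (x - 1) ^ i * x ^ ((k:ℤ) - i)) {(0:ℝ)}ᶜ 1 :=
    fun i _ => iteratedDerivWithin_const_mul h1 hu _ ((rb_phi_contDiffOn (N := ℓ) i ((k:ℤ) - i)).contDiffWithinAt h1)
  rw [Finset.sum_congr rfl hterm]
  rw [← Finset.sum_subset (Finset.range_subset_range.mpr (by omega) : Finset.range (ℓ+1) ⊆ Finset.range (n+1))
      (fun ν _ hν => by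
        rw [Finset.mem_range, not_lt] at hν
        rw [rb_vanish ℓ ν ((k:ℤ) - ν) (by omega), mul_zero])]
  rw [Finset.mul_sum]
  refine Finset.sum_congr rfl fun ν hν => ?_
  rw [Finset.mem_range] at hν
  rw [rb_polyterm k ℓ ν (by omega) hℓk]
  ring
end

section
/- For odd n ≥ 1 and every k with (n+1)/2 ≤ k ≤ n, the Bernoulli numbers satisfy Σ_{ν=0}^{k} ((2k-ν) choose k) · (n choose ν) · B_{n-ν} = 0. -/
section Aux

open Polynomial Finset

private theorem bern_reflect (n : ℕ) :
    (Polynomial.bernoulli n).comp (1 - X) = (-1 : ℚ) ^ n • Polynomial.bernoulli n := by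
  induction n with
  | zero => simp
  | succ n ih =>
    set D : ℚ[X] := (Polynomial.bernoulli (n+1)).comp (1 - X)
        - (-1 : ℚ) ^ (n+1) • Polynomial.bernoulli (n+1) with hDdef
    have hD : Polynomial.derivative D = 0 := by
      rw [hDdef, derivative_sub, derivative_comp, derivative_smul,
        Polynomial.derivative_bernoulli_add_one]
      simp [mul_comp, ih, pow_succ]
    have hC := Polynomial.eq_C_of_derivative_eq_zero hD
    have h0 : D.eval 0 = 0 := by
      rw [hDdef]
      simp [eval_comp]
      rcases n with _ | m
      · norm_num [bernoulli'_one, _root_.bernoulli_one]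
      · rcases Nat.even_or_odd (m+2) with he | ho
        · rw [bernoulli_eq_bernoulli'_of_ne_one (by omega), he.neg_one_pow]; ring
        · rw [bernoulli'_eq_zero_of_odd ho (by omega),
            bernoulli_eq_bernoulli'_of_ne_one (by omega),
            bernoulli'_eq_zero_of_odd ho (by omega)]
          ring
    have hz : D = 0 := by
      rw [hC] at h0 ⊢
      simpa using h0
    exact sub_eq_zero.mp hz

set_option maxRecDepth 4000 in
private theorem vand (k m : ℕ) (hm : m ≤ 2 * k) :
    ∑ ν ∈ Finset.range (k + 1),
      (-1 : ℚ) ^ ν * ((2 * k - ν).choose k : ℚ) * (m.choose ν : ℚ)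
      = ((2 * k - m).choose k : ℚ) := by
  have poly : (∑ ν ∈ Finset.range (m + 1),
      ((-1 : ℚ) ^ ν * (m.choose ν : ℚ)) • ((1 + X : ℚ[X]) ^ (2 * k - ν) * X ^ ν))
      = (1 + X : ℚ[X]) ^ (2 * k - m) := by
    calc (∑ ν ∈ Finset.range (m + 1),
        ((-1 : ℚ) ^ ν * (m.choose ν : ℚ)) • ((1 + X : ℚ[X]) ^ (2 * k - ν) * X ^ ν))
        = (∑ ν ∈ Finset.range (m + 1),
            (-X : ℚ[X]) ^ ν * (1 + X) ^ (m - ν) * (m.choose ν : ℚ[X])) * (1 + X) ^ (2 * k - m) := by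
          rw [Finset.sum_mul]
          refine Finset.sum_congr rfl fun ν hν => ?_
          rw [Finset.mem_range] at hν
          rw [show 2 * k - ν = (m - ν) + (2 * k - m) by omega, pow_add]
          simp only [smul_eq_C_mul, map_mul, map_pow, map_neg, map_one, C_eq_natCast]
          rw [show (-X : ℚ[X]) = -1 * X by ring, mul_pow]
          ring
      _ = ((-X : ℚ[X]) + (1 + X)) ^ m * (1 + X) ^ (2 * k - m) := by rw [← add_pow]
      _ = (1 + X : ℚ[X]) ^ (2 * k - m) := by norm_num
  have hc := congrArg (fun p : ℚ[X] => p.coeff k) poly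
  simp only [finset_sum_coeff, coeff_smul, coeff_mul_X_pow', coeff_one_add_X_pow,
    smul_eq_mul] at hc
  rw [← hc]
  have hF : ∑ ν ∈ Finset.range (k + 1),
      (-1 : ℚ) ^ ν * ((2 * k - ν).choose k : ℚ) * (m.choose ν : ℚ)
      = ∑ ν ∈ Finset.range (2 * k + 1),
        (-1 : ℚ) ^ ν * ((2 * k - ν).choose k : ℚ) * (m.choose ν : ℚ) := by
    refine Finset.sum_subset (by intro x hx; simp at hx ⊢; omega) ?_
    intro x hx1 hx2
    simp only [Finset.mem_range, not_lt] at hx1 hx2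
    rw [Nat.choose_eq_zero_of_lt (show 2 * k - x < k by omega)]
    push_cast; ring
  have hG : ∑ ν ∈ Finset.range (m + 1),
      (-1 : ℚ) ^ ν * (m.choose ν : ℚ) *
        (if ν ≤ k then (((2 * k - ν).choose (k - ν) : ℚ)) else 0)
      = ∑ ν ∈ Finset.range (2 * k + 1),
        (-1 : ℚ) ^ ν * (m.choose ν : ℚ) *
        (if ν ≤ k then (((2 * k - ν).choose (k - ν) : ℚ)) else 0) := by
    refine Finset.sum_subset (by intro x hx; simp at hx ⊢; omega) ?_
    intro x hx1 hx2
    simp only [Finset.mem_range, not_lt] at hx1 hx2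
    rw [Nat.choose_eq_zero_of_lt (show m < x by omega)]
    push_cast; ring
  rw [hF, hG]
  refine Finset.sum_congr rfl fun ν hν => ?_
  rw [Finset.mem_range] at hν
  by_cases h : ν ≤ k
  · rw [if_pos h, show (2 * k - ν).choose (k - ν) = (2 * k - ν).choose k by
      rw [show k - ν = (2 * k - ν) - k by omega]; exact Nat.choose_symm (by omega)]
    ring
  · rw [if_neg h, Nat.choose_eq_zero_of_lt (show 2 * k - ν < k by omega)]
    push_cast; ring

private theorem coeff_one_sub_X_pow (m ν : ℕ) :
    ((1 - X : ℚ[X]) ^ m).coeff ν = (-1 : ℚ) ^ ν * (m.choose ν : ℚ) := by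
  have h : (1 - X : ℚ[X]) ^ m = ∑ j ∈ Finset.range (m + 1),
      ((-1 : ℚ) ^ j * (m.choose j : ℚ)) • (X : ℚ[X]) ^ j := by
    rw [show (1 - X : ℚ[X]) = -X + 1 by ring, add_pow]
    refine Finset.sum_congr rfl fun j hj => ?_
    rw [show (-X : ℚ[X]) = -1 * X by ring, mul_pow]
    simp only [smul_eq_C_mul, map_mul, map_pow, map_neg, map_one, C_eq_natCast, one_pow]
    ring
  rw [h, finset_sum_coeff]
  simp only [coeff_smul, coeff_X_pow, smul_eq_mul, mul_ite, mul_one, mul_zero]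
  rw [Finset.sum_ite_eq (Finset.range (m + 1)) ν]
  by_cases h : ν ∈ Finset.range (m + 1)
  · rw [if_pos h]
  · rw [if_neg h]
    rw [Finset.mem_range, not_lt] at h
    rw [Nat.choose_eq_zero_of_lt (by omega)]
    ring

private theorem keyA (k : ℕ) (P : ℚ[X]) (hP : P.natDegree ≤ 2 * k) :
    ∑ ν ∈ Finset.range (k + 1), ((2 * k - ν).choose k : ℚ) * (P.comp (1 - X)).coeff ν
      = ∑ ν ∈ Finset.range (k + 1), ((2 * k - ν).choose k : ℚ) * P.coeff ν := by
  have hco : ∀ ν, (P.comp (1 - X)).coeff ν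
      = ∑ m ∈ Finset.range (2 * k + 1), P.coeff m * ((-1 : ℚ) ^ ν * (m.choose ν : ℚ)) := by
    intro ν
    conv_lhs => rw [P.as_sum_range' (2 * k + 1) (by omega)]
    rw [Polynomial.sum_comp, finset_sum_coeff]
    refine Finset.sum_congr rfl fun m hm => ?_
    rw [monomial_comp, coeff_C_mul, coeff_one_sub_X_pow]
  calc ∑ ν ∈ Finset.range (k + 1), ((2 * k - ν).choose k : ℚ) * (P.comp (1 - X)).coeff ν
      = ∑ m ∈ Finset.range (2 * k + 1), P.coeff m *
          ∑ ν ∈ Finset.range (k + 1),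
            (-1 : ℚ) ^ ν * ((2 * k - ν).choose k : ℚ) * (m.choose ν : ℚ) := by
        simp_rw [hco, Finset.mul_sum]
        rw [Finset.sum_comm]
        refine Finset.sum_congr rfl fun m _ => Finset.sum_congr rfl fun ν _ => by ring
    _ = ∑ m ∈ Finset.range (2 * k + 1), P.coeff m * ((2 * k - m).choose k : ℚ) := by
        refine Finset.sum_congr rfl fun m hm => ?_
        rw [Finset.mem_range] at hm
        rw [vand k m (by omega)]
    _ = ∑ ν ∈ Finset.range (k + 1), ((2 * k - ν).choose k : ℚ) * P.coeff ν := by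
        rw [show (∑ ν ∈ Finset.range (k + 1), ((2 * k - ν).choose k : ℚ) * P.coeff ν)
          = ∑ ν ∈ Finset.range (2 * k + 1), ((2 * k - ν).choose k : ℚ) * P.coeff ν from
          Finset.sum_subset (by intro x hx; simp at hx ⊢; omega) (by
            intro x hx1 hx2
            simp only [Finset.mem_range, not_lt] at hx1 hx2
            rw [Nat.choose_eq_zero_of_lt (show 2 * k - x < k by omega)]
            push_cast; ring)]
        exact Finset.sum_congr rfl fun ν _ => by ring

private theorem main_aux (n k : ℕ) (hodd : Odd n)
    (h1 : (n + 1) / 2 ≤ k) (h2 : k ≤ n) :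
    ∑ ν ∈ Finset.range (k + 1),
        ((2 * k - ν).choose k : ℚ) * (n.choose ν : ℚ) * _root_.bernoulli (n - ν) = 0 := by
  obtain ⟨j, hj⟩ := hodd
  have hn2k : n ≤ 2 * k := by omega
  have hdeg : (Polynomial.bernoulli n).natDegree ≤ 2 * k := by
    rw [Polynomial.bernoulli_def]
    refine Polynomial.natDegree_sum_le_of_forall_le _ _ fun i hi =>
      (Polynomial.natDegree_monomial_le _).trans ?_
    rw [Finset.mem_range] at hi
    omega
  have hrefl : (Polynomial.bernoulli n).comp (1 - X) = -(Polynomial.bernoulli n) := by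
    rw [bern_reflect, hj, pow_succ, pow_mul]
    norm_num
  have hA := keyA k (Polynomial.bernoulli n) hdeg
  rw [hrefl] at hA
  simp only [coeff_neg, mul_neg] at hA
  rw [Finset.sum_neg_distrib] at hA
  have hS : ∑ ν ∈ Finset.range (k + 1),
      ((2 * k - ν).choose k : ℚ) * (Polynomial.bernoulli n).coeff ν = 0 := by
    linarith [hA]
  rw [← hS]
  refine Finset.sum_congr rfl fun ν hν => ?_
  rw [Finset.mem_range] at hν
  have hcoeff : (Polynomial.bernoulli n).coeff ν
      = _root_.bernoulli (n - ν) * (n.choose ν : ℚ) := by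
    rw [Polynomial.bernoulli_def, finset_sum_coeff]
    simp only [coeff_monomial]
    rw [Finset.sum_ite_eq' (Finset.range (n + 1)) ν]
    rw [if_pos (Finset.mem_range.mpr (by omega))]
  rw [hcoeff]
  ring

end Aux

theorem bernoulli_symmetry_recurrence (n k : ℕ) (hodd : Odd n)
    (h1 : (n + 1) / 2 ≤ k) (h2 : k ≤ n) :
    ∑ ν ∈ Finset.range (k + 1),
        ((2 * k - ν).choose k : ℚ) * (n.choose ν : ℚ) * bernoulli (n - ν) = 0 :=
  main_aux n k hodd h1 h2
end

section
/- Let B'_{n,k} = Σ_{ν=k}^{n} (n choose ν)·(ν choose k)·B_ν for 0 ≤ k ≤ n. Then the reflection relation B'_{n,k} = (-1)^n · B'_{n,n-k} holds; equivalently, for all r, s ≥ 0, (-1)^r Σ_{ν=0}^{r} (r choose ν) B_{s+ν} = (-1)^s Σ_{ν=0}^{s} (s choose ν) B_{r+ν}. -/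
private def T (r s : ℕ) : ℚ :=
  ∑ ν ∈ Finset.range (r + 1), (r.choose ν : ℚ) * bernoulli (s + ν)

private lemma T_pascal (r s : ℕ) : T (r + 1) s = T r s + T r (s + 1) := by
  have h1 : T (r + 1) s
      = (((r+1).choose 0 : ℚ) * bernoulli (s + 0))
        + ∑ ν ∈ Finset.range (r + 1), ((r+1).choose (ν+1) : ℚ) * bernoulli (s + (ν+1)) := by
    rw [T, Finset.sum_range_succ']
    ring
  have h2 : ∀ ν : ℕ, ((r+1).choose (ν+1) : ℚ) = (r.choose ν : ℚ) + (r.choose (ν+1) : ℚ) := by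
    intro ν
    rw [Nat.choose_succ_succ]
    push_cast
    ring
  rw [h1]
  simp only [h2, add_mul]
  rw [Finset.sum_add_distrib]
  have h3 : ∑ ν ∈ Finset.range (r + 1), (r.choose ν : ℚ) * bernoulli (s + (ν+1))
      = T r (s + 1) := by
    apply Finset.sum_congr rfl
    intro ν _
    rw [show s + (ν + 1) = s + 1 + ν from by omega]
  have h4 : (((r+1).choose 0 : ℚ) * bernoulli (s + 0))
      + ∑ ν ∈ Finset.range (r + 1), (r.choose (ν+1) : ℚ) * bernoulli (s + (ν+1))
      = T r s := by
    rw [T, Finset.sum_range_succ, Finset.sum_range_succ']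
    have : r.choose (r + 1) = 0 := Nat.choose_eq_zero_of_lt (by omega)
    simp [this]
    ring
  rw [h3, add_comm, add_assoc]
  rw [show ∑ ν ∈ Finset.range (r + 1), (r.choose (ν+1) : ℚ) * bernoulli (s + (ν+1))
      + ((r+1).choose 0 : ℚ) * bernoulli (s + 0) = T r s by rw [← h4]; ring]
  ring

private lemma T_zero_right (s : ℕ) : T s 0 = (-1 : ℚ) ^ s * bernoulli s := by
  have h : T s 0 = (∑ ν ∈ Finset.range s, (s.choose ν : ℚ) * bernoulli ν) + bernoulli s := by
    rw [T, Finset.sum_range_succ]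
    simp
  rw [h, sum_bernoulli]
  rcases Nat.even_or_odd s with he | ho
  · have h1 : s ≠ 1 := by rintro rfl; simp at he
    simp [Even.neg_one_pow he, h1]
  · rcases eq_or_ne s 1 with rfl | hs1
    · norm_num [bernoulli_one]
    · have hz : bernoulli s = 0 := by
        rw [bernoulli_eq_bernoulli'_of_ne_one hs1]
        exact bernoulli'_eq_zero_of_odd ho (by rcases ho with ⟨m, rfl⟩; omega)
      simp [hz, hs1]

private lemma T_symm (r : ℕ) : ∀ s, (-1 : ℚ) ^ r * T r s = (-1 : ℚ) ^ s * T s r := by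
  induction r with
  | zero =>
    intro s
    have h0 : T 0 s = bernoulli s := by simp [T]
    rw [h0, T_zero_right, ← mul_assoc, ← pow_add]
    rw [Even.neg_one_pow ⟨s, rfl⟩]
    ring
  | succ r ih =>
    intro s
    have hL : T (r + 1) s = T r s + T r (s + 1) := T_pascal r s
    have hR : T (s + 1) r = T s r + T s (r + 1) := T_pascal s r
    have h1 := ih s
    have h2 := ih (s + 1)
    calc (-1:ℚ) ^ (r+1) * T (r+1) s
        = -((-1:ℚ)^r * T r s) - ((-1:ℚ)^r * T r (s+1)) := by rw [hL]; ring
      _ = -((-1:ℚ)^s * T s r) - ((-1:ℚ)^(s+1) * T (s+1) r) := by rw [h1, h2]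
      _ = (-1:ℚ)^s * (T (s+1) r - T s r) := by ring
      _ = (-1:ℚ)^s * T s (r+1) := by rw [hR]; ring

theorem bernoulli_reflection_and_reciprocity :
    (∀ n k : ℕ, k ≤ n →
      (∑ ν ∈ Finset.Icc k n, (n.choose ν : ℚ) * (ν.choose k : ℚ) * bernoulli ν)
        = (-1) ^ n *
            ∑ ν ∈ Finset.Icc (n - k) n,
              (n.choose ν : ℚ) * (ν.choose (n - k) : ℚ) * bernoulli ν) ∧
    (∀ r s : ℕ,
      (-1 : ℚ) ^ r * ∑ ν ∈ Finset.range (r + 1), (r.choose ν : ℚ) * bernoulli (s + ν)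
        = (-1 : ℚ) ^ s * ∑ ν ∈ Finset.range (s + 1), (s.choose ν : ℚ) * bernoulli (r + ν)) := by
  have key : ∀ k n : ℕ, k ≤ n →
      (∑ ν ∈ Finset.Icc k n, (n.choose ν : ℚ) * (ν.choose k : ℚ) * bernoulli ν)
        = (n.choose k : ℚ) * T (n - k) k := by
    intro k n hkn
    have hIcc : Finset.Icc k n = (Finset.range (n - k + 1)).map
        (addLeftEmbedding k) := by
      rw [Finset.range_eq_Ico, ← Finset.Ico_add_one_right_eq_Icc, Finset.map_add_left_Ico]
      congr 1 <;> omega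
    rw [hIcc, Finset.sum_map, T, Finset.mul_sum]
    apply Finset.sum_congr rfl
    intro j hj
    simp only [addLeftEmbedding_apply]
    have hjle : j ≤ n - k := by
      have := Finset.mem_range.mp hj; omega
    have hch : n.choose (k + j) * (k + j).choose k
        = n.choose k * (n - k).choose j := by
      have := Nat.choose_mul (k := k + j) (n := n) (s := k) (by omega)
      rw [this, Nat.add_sub_cancel_left]
    have hch' : (n.choose (k + j) : ℚ) * ((k + j).choose k : ℚ)
        = (n.choose k : ℚ) * ((n - k).choose j : ℚ) := by
      exact_mod_cast congrArg (Nat.cast : ℕ → ℚ) hch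
    linear_combination bernoulli (k + j) * hch'
  constructor
  · intro n k hkn
    rw [key k n hkn, key (n - k) n (by omega)]
    have hs : n - (n - k) = k := by omega
    rw [hs]
    have hchoose : (n.choose (n - k) : ℚ) = (n.choose k : ℚ) := by
      rw [Nat.choose_symm hkn]
    rw [hchoose]
    have := T_symm (n - k) k
    have hn : ((-1 : ℚ)) ^ n = (-1 : ℚ) ^ (n - k) * (-1 : ℚ) ^ k := by
      rw [← pow_add]; congr 1; omega
    have h2 : T (n - k) k = (-1 : ℚ) ^ (n - k) * (-1:ℚ) ^ k * T k (n - k) := by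
      have hsq : ((-1 : ℚ)) ^ (n - k) * (-1 : ℚ) ^ (n-k) = 1 := by
        rw [← pow_add]; exact Even.neg_one_pow ⟨n - k, rfl⟩
      calc T (n - k) k = ((-1:ℚ)^(n-k) * (-1:ℚ)^(n-k)) * T (n-k) k := by rw [hsq]; ring
        _ = (-1:ℚ)^(n-k) * ((-1:ℚ)^(n-k) * T (n-k) k) := by ring
        _ = (-1:ℚ)^(n-k) * ((-1:ℚ)^k * T k (n-k)) := by rw [this]
        _ = (-1 : ℚ) ^ (n - k) * (-1:ℚ) ^ k * T k (n - k) := by ring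
    rw [h2, hn]
    ring
  · intro r s
    exact T_symm r s
end
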